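/- Let g ∈ 𝒢. A random vector (X₁,…,X_d) of real random variables on Ω is g-comonotonic if and only if it is PSI(g)-concentrated. -/

import Mathlib

open MeasureTheory Filter Set

section Defs

variable {Ω : Type*} [MeasurableSpace Ω]

/-- An atomless probability space: every event can be split to achieve any smaller measure
(Sierpiński's property, equivalent to atomlessness for probability measures). -/
def Atomless (P : Measure Ω) : Prop :=
  ∀ A : Set Ω, MeasurableSet A → ∀ r : ENNReal, r ≤ P A →
    ∃ B : Set Ω, B ⊆ A ∧ MeasurableSet B ∧ P B = r

/-- `A` is a tail event for `X`: outside a null set, `X ω ≥ X ω'` for `ω ∈ A`, `ω' ∈ Aᶜ`. -/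
def IsTailEvent (P : Measure Ω) (X : Ω → ℝ) (A : Set Ω) : Prop :=
  MeasurableSet A ∧ ∃ N : Set Ω, P N = 0 ∧
    ∀ ω ∈ A, ω ∉ N → ∀ ω' ∈ Aᶜ, ω' ∉ N → X ω' ≤ X ω

/-- `A` is a `p`-tail event for `X`: a tail event with `P A = 1 - p`. -/
def IsPTailEvent (P : Measure Ω) (X : Ω → ℝ) (p : ℝ) (A : Set Ω) : Prop :=
  IsTailEvent P X A ∧ P A = ENNReal.ofReal (1 - p)

/-- A random vector is `p`-concentrated if a single event is a `p`-tail event for every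
component. -/
def PConcentrated (P : Measure Ω) {d : ℕ} (X : Fin d → Ω → ℝ) (p : ℝ) : Prop :=
  ∃ A : Set Ω, ∀ i, IsPTailEvent P (X i) p A

/-- A random vector is `K`-concentrated if it is `p`-concentrated for every `p ∈ K`. -/
def KConcentrated (P : Measure Ω) {d : ℕ} (X : Fin d → Ω → ℝ) (K : Set ℝ) : Prop :=
  ∀ p ∈ K, PConcentrated P X p

/-- Left quantile function `Q_X⁻(p) = inf {x | ℙ(X ≤ x) ≥ p}` (also `VaR_p`). -/
noncomputable def leftQuantile (P : Measure Ω) (X : Ω → ℝ) (p : ℝ) : ℝ :=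
  sInf {x : ℝ | ENNReal.ofReal p ≤ P {ω | X ω ≤ x}}

/-- Right quantile function `Q_X⁺(p) = inf {x | ℙ(X ≤ x) > p}` (also `VaR⁺_p`). -/
noncomputable def rightQuantile (P : Measure Ω) (X : Ω → ℝ) (p : ℝ) : ℝ :=
  sInf {x : ℝ | ENNReal.ofReal p < P {ω | X ω ≤ x}}

/-- `Q_X : [0,1] → ℝ`, equal to `Q_X⁺` at `0` and to `Q_X⁻` on `(0,1]`. -/
noncomputable def Q (P : Measure Ω) (X : Ω → ℝ) (p : ℝ) : ℝ :=
  if p = 0 then rightQuantile P X 0 else leftQuantile P X p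

/-- Membership in L∞: essentially bounded (and measurable) random variables. -/
def MemLinf (P : Measure Ω) (X : Ω → ℝ) : Prop :=
  Measurable X ∧ ∃ C : ℝ, ∀ᵐ ω ∂P, |X ω| ≤ C

/-- A functional `ρ` on L∞ is `K`-additive if it is additive on every `K`-concentrated
random vector (of dimension `d ≥ 2`) with essentially bounded components. -/
def KAdditive (P : Measure Ω) (K : Set ℝ) (ρ : (Ω → ℝ) → ℝ) : Prop :=
  ∀ d : ℕ, 2 ≤ d → ∀ X : Fin d → Ω → ℝ, (∀ i, MemLinf P (X i)) →
    KConcentrated P X K → ρ (∑ i, X i) = ∑ i, ρ (X i)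

/-- A pair of random variables is comonotonic. -/
def ComonotonePair (P : Measure Ω) (X Z : Ω → ℝ) : Prop :=
  ∀ᵐ w ∂(P.prod P), 0 ≤ (X w.1 - X w.2) * (Z w.1 - Z w.2)

/-- A random vector is `g`-comonotonic: some random variable `Z` with quantile function `g`
on `[0,1]` is comonotonic with every component. -/
def GComonotone (P : Measure Ω) {d : ℕ} (g : ℝ → ℝ) (X : Fin d → Ω → ℝ) : Prop :=
  ∃ Z : Ω → ℝ, Measurable Z ∧ (∀ p ∈ Icc (0:ℝ) 1, Q P Z p = g p) ∧
    ∀ i, ComonotonePair P (X i) Z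

/-- A functional `ρ` on L∞ is `g`-additive if it is additive on every `g`-comonotonic
random vector (of dimension `d ≥ 2`) with essentially bounded components. -/
def GAdditive (P : Measure Ω) (g : ℝ → ℝ) (ρ : (Ω → ℝ) → ℝ) : Prop :=
  ∀ d : ℕ, 2 ≤ d → ∀ X : Fin d → Ω → ℝ, (∀ i, MemLinf P (X i)) →
    GComonotone P g X → ρ (∑ i, X i) = ∑ i, ρ (X i)

/-- The distortion riskmetric `I_h`. -/
noncomputable def distortionRM (P : Measure Ω) (h : ℝ → ℝ) (X : Ω → ℝ) : ℝ :=
  (∫ x in Iio (0:ℝ), (h ((P {ω | x < X ω}).toReal) - h 1)) +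
    ∫ x in Ioi (0:ℝ), h ((P {ω | x < X ω}).toReal)

/-- The spectral risk measure `ρ_g(X) = ∫₀¹ g(t) Q_X(t) dt`. -/
noncomputable def specRM (P : Measure Ω) (g : ℝ → ℝ) (X : Ω → ℝ) : ℝ :=
  ∫ t in (0:ℝ)..1, g t * Q P X t

/-- Expected Shortfall at level `p`. -/
noncomputable def ES (P : Measure Ω) (p : ℝ) (X : Ω → ℝ) : ℝ :=
  (1 - p)⁻¹ * ∫ q in p..1, leftQuantile P X q

end Defs

/-- The class 𝒢 of increasing functions on `[0,1]`, right-continuous at `0` and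
left-continuous on `(0,1]`. -/
def MemG (g : ℝ → ℝ) : Prop :=
  MonotoneOn g (Icc 0 1) ∧
    Tendsto g (nhdsWithin 0 (Ioi 0)) (nhds (g 0)) ∧
    ∀ p ∈ Ioc (0:ℝ) 1, Tendsto g (nhdsWithin p (Iio p)) (nhds (g p))

/-- `p` is a point of strict increase on the right of `g`. -/
def IsPSIR (g : ℝ → ℝ) (p : ℝ) : Prop :=
  p ∈ Ico (0:ℝ) 1 ∧ ∀ s ∈ Ioc p 1, g p < g s

/-- `p` is a point of strict increase on the left of `g`. -/
def IsPSIL (g : ℝ → ℝ) (p : ℝ) : Prop :=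
  p ∈ Ioc (0:ℝ) 1 ∧ ∀ s ∈ Ico (0:ℝ) p, g s < g p

/-- The set of points of strict increase of `g`. -/
def PSI (g : ℝ → ℝ) : Set ℝ :=
  {p | IsPSIR g p ∨ IsPSIL g p}

/-- `f ≾ g`: there is an increasing `h` with `f = h ∘ g` a.e. on `[0,1]`. -/
def Prec (f g : ℝ → ℝ) : Prop :=
  ∃ h : ℝ → ℝ, Monotone h ∧
    ∀ᵐ t ∂(volume.restrict (Icc (0:ℝ) 1)), f t = h (g t)

/-- The map `𝒱 : K ↦ (p ↦ sup ((0,p) ∩ K))` (with `sup ∅ = 0`, the junk value of `sSup` in `ℝ`). -/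
noncomputable def VK (K : Set ℝ) (p : ℝ) : ℝ :=
  sSup (Ioo (0:ℝ) p ∩ K)

/-- A risk spectrum: a nonnegative element of 𝒢 integrating to 1. -/
def IsRiskSpectrum (g : ℝ → ℝ) : Prop :=
  MemG g ∧ (∀ t ∈ Icc (0:ℝ) 1, 0 ≤ g t) ∧ (∫ t in (0:ℝ)..1, g t) = 1
set_option linter.unusedSectionVars false
section Aux
variable {Ω : Type*} [MeasurableSpace Ω] {P : MeasureTheory.Measure Ω}
  [MeasureTheory.IsProbabilityMeasure P] {Z : Ω → ℝ}

lemma cdf_mono (Z : Ω → ℝ) : Monotone (fun x => P {ω | Z ω ≤ x}) := by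
  intro a b hab
  exact measure_mono (fun ω h => le_trans h hab)

lemma cdf_set_mono {a b : ℝ} (hab : a ≤ b) : {ω | Z ω ≤ a} ⊆ {ω | Z ω ≤ b} :=
  fun ω h => le_trans h hab

lemma cdf_iSup_nat (hZ : Measurable Z) : (⨆ n : ℕ, P {ω | Z ω ≤ n}) = 1 := by
  have h1 : (⋃ n : ℕ, {ω | Z ω ≤ n}) = univ := by
    ext ω; simp only [mem_iUnion, mem_univ, iff_true, mem_setOf_eq]
    obtain ⟨n, hn⟩ := exists_nat_ge (Z ω)
    exact ⟨n, hn⟩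
  have hmono : Monotone (fun n : ℕ => {ω | Z ω ≤ (n:ℝ)}) :=
    fun a b hab => cdf_set_mono (by exact_mod_cast hab)
  have := (hmono.directed_le).measure_iUnion (μ := P)
  rw [h1, measure_univ] at this
  exact this.symm

lemma cdf_iInf_nat (hZ : Measurable Z) : (⨅ n : ℕ, P {ω | Z ω ≤ -(n:ℝ)}) = 0 := by
  have h1 : (⋂ n : ℕ, {ω | Z ω ≤ -(n:ℝ)}) = ∅ := by
    ext ω; simp only [mem_iInter, mem_empty_iff_false, iff_false, not_forall, mem_setOf_eq]
    obtain ⟨n, hn⟩ := exists_nat_gt (-(Z ω))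
    exact ⟨n, by push_neg; linarith⟩
  have hanti : Antitone (fun n : ℕ => {ω | Z ω ≤ -(n:ℝ)}) := by
    intro a b hab
    exact cdf_set_mono (by simp only [neg_le_neg_iff, Nat.cast_le]; exact hab)
  have := Directed.measure_iInter (μ := P)
      (fun n => (measurableSet_le hZ measurable_const).nullMeasurableSet) (hanti.directed_ge)
      ⟨0, measure_ne_top _ _⟩
  rw [h1, measure_empty] at this
  exact this.symm

lemma exists_cdf_lt (hZ : Measurable Z) {s : ℝ} (hs : 0 < s) :
    ∃ x : ℝ, P {ω | Z ω ≤ x} < ENNReal.ofReal s := by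
  by_contra h
  push_neg at h
  have : ENNReal.ofReal s ≤ ⨅ n : ℕ, P {ω | Z ω ≤ -(n:ℝ)} := le_iInf fun n => h _
  rw [cdf_iInf_nat hZ] at this
  simp only [nonpos_iff_eq_zero, ENNReal.ofReal_eq_zero] at this
  linarith

lemma exists_cdf_ge (hZ : Measurable Z) {s : ℝ} (hs : s < 1) :
    ∃ x : ℝ, ENNReal.ofReal s ≤ P {ω | Z ω ≤ x} := by
  by_contra h
  push_neg at h
  have : (⨆ n : ℕ, P {ω | Z ω ≤ n}) ≤ ENNReal.ofReal s := iSup_le fun n => (h _).le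
  rw [cdf_iSup_nat hZ] at this
  have := lt_of_le_of_lt this (ENNReal.ofReal_lt_one.mpr hs)
  exact lt_irrefl _ this

lemma bddBelow_quantileSet (hZ : Measurable Z) {s : ℝ} (hs : 0 < s) :
    BddBelow {x : ℝ | ENNReal.ofReal s ≤ P {ω | Z ω ≤ x}} := by
  obtain ⟨x0, hx0⟩ := exists_cdf_lt (P := P) hZ hs
  refine ⟨x0, fun y hy => ?_⟩
  by_contra hxy
  push_neg at hxy
  exact absurd (le_trans hy (cdf_mono (P := P) Z hxy.le)) (not_le.mpr hx0)

/-- Right-continuity of the CDF at a point. -/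
lemma cdf_right_cont (hZ : Measurable Z) (c : ℝ) :
    P {ω | Z ω ≤ c} = ⨅ k : ℕ, P {ω | Z ω ≤ c + 1/(k+1)} := by
  have h1 : {ω | Z ω ≤ c} = ⋂ k : ℕ, {ω | Z ω ≤ c + 1/(k+1)} := by
    ext ω
    simp only [mem_iInter, mem_setOf_eq]
    constructor
    · intro h k; have : (0:ℝ) < 1/(k+1) := by positivity
      linarith
    · intro h
      by_contra hc
      push_neg at hc
      obtain ⟨k, hk⟩ := exists_nat_one_div_lt (show (0:ℝ) < Z ω - c by linarith)
      have := h k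
      linarith
  have hanti : Antitone (fun k : ℕ => {ω | Z ω ≤ c + 1/(k+1)}) := by
    intro a b hab
    have hab' : (a:ℝ) ≤ b := by exact_mod_cast hab
    refine cdf_set_mono (by gcongr)
  have := Directed.measure_iInter (μ := P)
      (fun n => (measurableSet_le hZ measurable_const).nullMeasurableSet) (hanti.directed_ge)
      ⟨0, measure_ne_top _ _⟩
  rw [← h1] at this
  exact this

/-- Left limit of the CDF at a point. -/
lemma cdf_left_lim (hZ : Measurable Z) (c : ℝ) :
    P {ω | Z ω < c} = ⨆ k : ℕ, P {ω | Z ω ≤ c - 1/(k+1)} := by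
  have h1 : {ω | Z ω < c} = ⋃ k : ℕ, {ω | Z ω ≤ c - 1/(k+1)} := by
    ext ω
    simp only [mem_iUnion, mem_setOf_eq]
    constructor
    · intro h
      obtain ⟨k, hk⟩ := exists_nat_one_div_lt (show (0:ℝ) < c - Z ω by linarith)
      exact ⟨k, by linarith⟩
    · rintro ⟨k, hk⟩
      have : (0:ℝ) < 1/(k+1) := by positivity
      linarith
  have hmono : Monotone (fun k : ℕ => {ω | Z ω ≤ c - 1/(k+1)}) := by
    intro a b hab
    have hab' : (a:ℝ) ≤ b := by exact_mod_cast hab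
    refine cdf_set_mono (by gcongr)
  have := (hmono.directed_le).measure_iUnion (μ := P)
  rw [← h1] at this
  exact this

end Aux
section Aux2
variable {Ω : Type*} [MeasurableSpace Ω] {P : MeasureTheory.Measure Ω}
  [MeasureTheory.IsProbabilityMeasure P] {Z : Ω → ℝ} {g : ℝ → ℝ}

lemma cdf_ge_of_leftQuantile (hZ : Measurable Z) {p : ℝ} (hp : 0 < p)
    (hne : {x : ℝ | ENNReal.ofReal p ≤ P {ω | Z ω ≤ x}}.Nonempty) :
    ENNReal.ofReal p ≤ P {ω | Z ω ≤ leftQuantile P Z p} := by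
  set S := {x : ℝ | ENNReal.ofReal p ≤ P {ω | Z ω ≤ x}} with hS
  have hbdd := bddBelow_quantileSet (P := P) hZ hp
  have hc : leftQuantile P Z p = sInf S := rfl
  rw [hc, cdf_right_cont hZ]
  refine le_iInf fun k => ?_
  have : sInf S < sInf S + 1/(k+1) := by
    have : (0:ℝ) < 1/(k+1) := by positivity
    linarith
  obtain ⟨y, hy, hy2⟩ := (csInf_lt_iff hbdd hne).mp this
  exact le_trans hy (measure_mono (cdf_set_mono hy2.le))

lemma quantileSet_nonempty_one (hZ : Measurable Z) (hgm : MonotoneOn g (Icc (0:ℝ) 1))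
    (hQ : ∀ p ∈ Icc (0:ℝ) 1, Q P Z p = g p) :
    ∃ x : ℝ, ENNReal.ofReal 1 ≤ P {ω | Z ω ≤ x} := by
  by_contra h
  push_neg at h
  set M := g 1 with hM
  have h1 : P {ω | Z ω ≤ M + 1} < ENNReal.ofReal 1 := h _
  rw [ENNReal.ofReal_one] at h1
  set t := (P {ω | Z ω ≤ M + 1}).toReal with ht
  have ht0 : 0 ≤ t := ENNReal.toReal_nonneg
  have ht1 : t < 1 := by
    rw [ht, ← ENNReal.toReal_one]
    exact ENNReal.toReal_strict_mono (by norm_num) h1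
  set p' := (t + 1)/2 with hp'
  have hp'0 : 0 < p' := by positivity
  have hp'1 : p' < 1 := by rw [hp']; linarith
  have hp'mem : p' ∈ Icc (0:ℝ) 1 := ⟨hp'0.le, hp'1.le⟩
  have hlt : P {ω | Z ω ≤ M + 1} < ENNReal.ofReal p' := by
    rw [ENNReal.lt_ofReal_iff_toReal_lt (measure_ne_top _ _)]
    rw [hp']; linarith
  have hlb : ∀ y ∈ {x : ℝ | ENNReal.ofReal p' ≤ P {ω | Z ω ≤ x}}, M + 1 ≤ y := by
    intro y hy
    by_contra hxy
    push_neg at hxy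
    exact absurd (le_trans hy (measure_mono (cdf_set_mono hxy.le))) (not_le.mpr hlt)
  have hne := exists_cdf_ge (P := P) hZ hp'1
  have : M + 1 ≤ leftQuantile P Z p' := le_csInf hne hlb
  have hQp : Q P Z p' = g p' := hQ p' hp'mem
  rw [Q, if_neg (ne_of_gt hp'0)] at hQp
  have : M + 1 ≤ g p' := hQp ▸ this
  have : g p' ≤ M := hgm hp'mem (by norm_num : (1:ℝ) ∈ Icc (0:ℝ) 1) hp'1.le
  linarith

/-- The CDF value at `g p` when `p` is a PSIR. -/
lemma cdf_at_psir (hZ : Measurable Z) (hgm : MonotoneOn g (Icc (0:ℝ) 1))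
    (hQ : ∀ p ∈ Icc (0:ℝ) 1, Q P Z p = g p) {p : ℝ} (hp : IsPSIR g p) :
    P {ω | Z ω ≤ g p} = ENNReal.ofReal p := by
  obtain ⟨⟨hp0, hp1⟩, hpsir⟩ := hp
  have hub : ∀ s, p < s → s ≤ 1 → P {ω | Z ω ≤ g p} < ENNReal.ofReal s := by
    intro s hs1 hs2
    have hs0 : 0 < s := lt_of_le_of_lt hp0 hs1
    have hgs : g p < leftQuantile P Z s := by
      have := hQ s ⟨hs0.le, hs2⟩
      rw [Q, if_neg (ne_of_gt hs0)] at this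
      rw [this]; exact hpsir s ⟨hs1, hs2⟩
    by_contra hcon
    push_neg at hcon
    have hmem : g p ∈ {x : ℝ | ENNReal.ofReal s ≤ P {ω | Z ω ≤ x}} := hcon
    have := csInf_le (bddBelow_quantileSet (P := P) hZ hs0) hmem
    exact absurd this (not_le.mpr hgs)
  -- ≤ direction
  have hle : P {ω | Z ω ≤ g p} ≤ ENNReal.ofReal p := by
    by_contra hcon
    push_neg at hcon
    set μ := P {ω | Z ω ≤ g p} with hμ
    have hμt : p < μ.toReal := by
      have := ENNReal.toReal_strict_mono (measure_ne_top _ _) hcon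
      rwa [ENNReal.toReal_ofReal hp0] at this
    have hμ1 : μ.toReal ≤ 1 := by
      rw [← ENNReal.toReal_one]
      exact ENNReal.toReal_mono (by norm_num) prob_le_one
    set s := min 1 ((p + μ.toReal)/2) with hs
    have hs1 : p < s := by
      rw [hs]; rcases le_or_gt 1 ((p + μ.toReal)/2) with h | h
      · rw [min_eq_left h]; exact hp1
      · rw [min_eq_right h.le]; linarith
    have hs2 : s ≤ 1 := min_le_left _ _
    have := hub s hs1 hs2
    have hsμ : s ≤ μ.toReal := by
      rw [hs]
      rcases le_or_gt 1 ((p + μ.toReal)/2) with h | h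
      · rw [min_eq_left h]; linarith
      · rw [min_eq_right h.le]; linarith
    have : μ < ENNReal.ofReal μ.toReal :=
      lt_of_lt_of_le this (ENNReal.ofReal_le_ofReal hsμ)
    rw [ENNReal.ofReal_toReal (measure_ne_top _ _)] at this
    exact lt_irrefl _ this
  -- ≥ direction
  rcases eq_or_lt_of_le hp0 with h0 | h0
  · have : ENNReal.ofReal p = 0 := by rw [← h0]; simp
    rw [this] at hle ⊢
    exact le_antisymm hle zero_le
  · refine le_antisymm hle ?_
    have hne := exists_cdf_ge (P := P) hZ hp1
    have hQp := hQ p ⟨hp0, hp1.le⟩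
    rw [Q, if_neg (ne_of_gt h0)] at hQp
    rw [← hQp]
    exact cdf_ge_of_leftQuantile hZ h0 hne

/-- The lower CDF value at `g p` when `p` is a PSIL. -/
lemma cdf_lt_at_psil (hZ : Measurable Z) (hgm : MonotoneOn g (Icc (0:ℝ) 1))
    (hQ : ∀ p ∈ Icc (0:ℝ) 1, Q P Z p = g p) {p : ℝ} (hp : IsPSIL g p) :
    P {ω | Z ω < g p} = ENNReal.ofReal p := by
  obtain ⟨⟨hp0, hp1⟩, hpsil⟩ := hp
  have hQp := hQ p ⟨hp0.le, hp1⟩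
  rw [Q, if_neg (ne_of_gt hp0)] at hQp
  -- ≤ direction
  have hle : P {ω | Z ω < g p} ≤ ENNReal.ofReal p := by
    rw [cdf_left_lim hZ]
    refine iSup_le fun k => ?_
    have h01 : (0:ℝ) < 1/((k:ℝ)+1) := by positivity
    have hlt : g p - 1/(k+1) < leftQuantile P Z p := by
      rw [hQp]; linarith
    by_contra hcon
    push_neg at hcon
    have hmem : g p - 1/(k+1) ∈ {x : ℝ | ENNReal.ofReal p ≤ P {ω | Z ω ≤ x}} := hcon.le
    have := csInf_le (bddBelow_quantileSet (P := P) hZ hp0) hmem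
    exact absurd this (not_le.mpr hlt)
  refine le_antisymm hle ?_
  by_contra hcon
  push_neg at hcon
  set μ := P {ω | Z ω < g p} with hμ
  have hμt : μ.toReal < p := by
    have := ENNReal.toReal_strict_mono (ENNReal.ofReal_ne_top) hcon
    rwa [ENNReal.toReal_ofReal hp0.le] at this
  have hμ0 : 0 ≤ μ.toReal := ENNReal.toReal_nonneg
  set s := (μ.toReal + p)/2 with hs
  have hs0 : 0 < s := by positivity
  have hsp : s < p := by rw [hs]; linarith
  have hs1 : s < 1 := lt_of_lt_of_le hsp hp1
  have hgs : g s < g p := hpsil s ⟨hs0.le, hsp⟩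
  have hQs := hQ s ⟨hs0.le, hs1.le⟩
  rw [Q, if_neg (ne_of_gt hs0)] at hQs
  have hne := exists_cdf_ge (P := P) hZ hs1
  have hbdd := bddBelow_quantileSet (P := P) hZ hs0
  have : sInf {x : ℝ | ENNReal.ofReal s ≤ P {ω | Z ω ≤ x}} < g p := by
    have : leftQuantile P Z s = g s := hQs
    rw [show sInf {x : ℝ | ENNReal.ofReal s ≤ P {ω | Z ω ≤ x}} = leftQuantile P Z s from rfl,
      this]
    exact hgs
  obtain ⟨y, hy, hy2⟩ := (csInf_lt_iff hbdd hne).mp this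
  have hsub : {ω | Z ω ≤ y} ⊆ {ω | Z ω < g p} := fun ω h => lt_of_le_of_lt h hy2
  have : ENNReal.ofReal s ≤ μ := le_trans hy (measure_mono hsub)
  have : s ≤ μ.toReal := by
    rw [← ENNReal.toReal_ofReal hs0.le]
    exact ENNReal.toReal_mono (measure_ne_top _ _) this
  rw [hs] at this; linarith

/-- Transfer of the tail property through a comonotone pair, when `A` strictly
separates `Z`. -/
lemma tail_transfer {X0 : Ω → ℝ} (hX0 : Measurable X0) (hZ : Measurable Z)
    (hcom : ComonotonePair P X0 Z) {A : Set Ω}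
    (hsep : ∀ ω ∈ A, ∀ ω' ∈ Aᶜ, Z ω' < Z ω) :
    ∃ N : Set Ω, P N = 0 ∧
      ∀ ω ∈ A, ω ∉ N → ∀ ω' ∈ Aᶜ, ω' ∉ N → X0 ω' ≤ X0 ω := by
  -- the bad set in the product is null
  have hbad : (P.prod P) {w : Ω × Ω | ¬ (0 ≤ (X0 w.1 - X0 w.2) * (Z w.1 - Z w.2))} = 0 := by
    rw [← MeasureTheory.ae_iff]; exact hcom
  -- for each rational t, one of the two pieces is null
  have hkey : ∀ t : ℚ, P (A ∩ {ω | X0 ω < t}) = 0 ∨ P (Aᶜ ∩ {ω | (t:ℝ) < X0 ω}) = 0 := by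
    intro t
    by_contra hcon
    push_neg at hcon
    obtain ⟨h1, h2⟩ := hcon
    have hsub : (A ∩ {ω | X0 ω < t}) ×ˢ (Aᶜ ∩ {ω | (t:ℝ) < X0 ω}) ⊆
        {w : Ω × Ω | ¬ (0 ≤ (X0 w.1 - X0 w.2) * (Z w.1 - Z w.2))} := by
      rintro ⟨ω, ω'⟩ ⟨⟨hωA, hωt⟩, ⟨hω'A, hω't⟩⟩
      simp only [mem_setOf_eq, not_le]
      have hX : X0 ω - X0 ω' < 0 := by
        simp only [mem_setOf_eq] at hωt hω't; linarith
      have hZ' : 0 < Z ω - Z ω' := by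
        have := hsep ω hωA ω' hω'A; linarith
      exact mul_neg_of_neg_of_pos hX hZ'
    have := measure_mono (μ := P.prod P) hsub
    rw [hbad, Measure.prod_prod] at this
    simp only [nonpos_iff_eq_zero, mul_eq_zero] at this
    rcases this with h | h
    · exact h1 h
    · exact h2 h
  -- assemble the null set
  classical
  set N : Set Ω := ⋃ t : ℚ, (if P (A ∩ {ω | X0 ω < t}) = 0 then A ∩ {ω | X0 ω < t}
      else Aᶜ ∩ {ω | (t:ℝ) < X0 ω}) with hN
  have hNnull : P N = 0 := by
    refine measure_iUnion_null fun t => ?_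
    split_ifs with h
    · exact h
    · rcases hkey t with h' | h'
      · exact absurd h' h
      · exact h'
  refine ⟨N, hNnull, fun ω hωA hωN ω' hω'A hω'N => ?_⟩
  by_contra hlt
  push_neg at hlt
  obtain ⟨t, ht1, ht2⟩ := exists_rat_btwn hlt
  have hωmem : ω ∈ A ∩ {ω | X0 ω < t} := ⟨hωA, ht1⟩
  have hω'mem : ω' ∈ Aᶜ ∩ {ω | (t:ℝ) < X0 ω} := ⟨hω'A, ht2⟩
  rcases hkey t with h | h
  · exact hωN (mem_iUnion.mpr ⟨t, by rw [if_pos h]; exact hωmem⟩)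
  · by_cases h0 : P (A ∩ {ω | X0 ω < t}) = 0
    · exact hωN (mem_iUnion.mpr ⟨t, by rw [if_pos h0]; exact hωmem⟩)
    · exact hω'N (mem_iUnion.mpr ⟨t, by rw [if_neg h0]; exact hω'mem⟩)

end Aux2
section Fwd
variable {Ω : Type*} [MeasurableSpace Ω] {P : MeasureTheory.Measure Ω}
  [MeasureTheory.IsProbabilityMeasure P] {g : ℝ → ℝ} {d : ℕ} {X : Fin d → Ω → ℝ}

lemma gcomonotone_to_concentrated (hg : MemG g) (hX : ∀ i, Measurable (X i))
    (h : GComonotone P g X) : KConcentrated P X (PSI g) := by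
  obtain ⟨Z, hZm, hQ, hcom⟩ := h
  intro p hp
  rcases hp with hpsir | hpsil
  · -- PSIR case : A = {g p < Z}
    obtain ⟨⟨hp0, hp1⟩, _⟩ := id hpsir
    refine ⟨{ω | g p < Z ω}, fun i => ?_⟩
    have hmeas : MeasurableSet {ω | g p < Z ω} := measurableSet_lt measurable_const hZm
    have hsep : ∀ ω ∈ {ω | g p < Z ω}, ∀ ω' ∈ {ω | g p < Z ω}ᶜ, Z ω' < Z ω := by
      intro ω hω ω' hω'
      simp only [mem_compl_iff, mem_setOf_eq, not_lt] at hω hω'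
      exact lt_of_le_of_lt hω' hω
    obtain ⟨N, hN0, hNtail⟩ := tail_transfer (hX i) hZm (hcom i) hsep
    refine ⟨⟨hmeas, N, hN0, hNtail⟩, ?_⟩
    have hcompl : {ω | g p < Z ω} = {ω | Z ω ≤ g p}ᶜ := by
      ext ω; simp [not_le]
    rw [hcompl, prob_compl_eq_one_sub (measurableSet_le hZm measurable_const),
      cdf_at_psir hZm hg.1 hQ hpsir, ENNReal.ofReal_sub 1 hp0, ENNReal.ofReal_one]
  · -- PSIL case : A = {g p ≤ Z}
    obtain ⟨⟨hp0, hp1⟩, _⟩ := id hpsil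
    refine ⟨{ω | g p ≤ Z ω}, fun i => ?_⟩
    have hmeas : MeasurableSet {ω | g p ≤ Z ω} := measurableSet_le measurable_const hZm
    have hsep : ∀ ω ∈ {ω | g p ≤ Z ω}, ∀ ω' ∈ {ω | g p ≤ Z ω}ᶜ, Z ω' < Z ω := by
      intro ω hω ω' hω'
      simp only [mem_compl_iff, mem_setOf_eq, not_le] at hω hω'
      exact lt_of_lt_of_le hω' hω
    obtain ⟨N, hN0, hNtail⟩ := tail_transfer (hX i) hZm (hcom i) hsep
    refine ⟨⟨hmeas, N, hN0, hNtail⟩, ?_⟩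
    have hcompl : {ω | g p ≤ Z ω} = {ω | Z ω < g p}ᶜ := by
      ext ω; simp [not_lt]
    rw [hcompl, prob_compl_eq_one_sub (measurableSet_lt hZm measurable_const),
      cdf_lt_at_psil hZm hg.1 hQ hpsil, ENNReal.ofReal_sub 1 hp0.le, ENNReal.ofReal_one]

end Fwd
section Bwd1
variable {Ω : Type*} [MeasurableSpace Ω]

/-- Between any two points of `[0,1]` where `g` increases there is a PSI point. -/
lemma psi_between {g : ℝ → ℝ} (hgm : MonotoneOn g (Icc (0:ℝ) 1)) {a b : ℝ}
    (ha : a ∈ Icc (0:ℝ) 1) (hb : b ∈ Icc (0:ℝ) 1) (hgab : g a < g b) :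
    ∃ q ∈ Icc a b, q ∈ PSI g := by
  set T := {u : ℝ | u ∈ Icc (0:ℝ) 1 ∧ g a < g u} with hT
  have hbT : b ∈ T := ⟨hb, hgab⟩
  have hbdd : BddBelow T := ⟨0, fun u hu => hu.1.1⟩
  set q := sInf T with hq
  have hq0 : 0 ≤ q := le_csInf ⟨b, hbT⟩ fun u hu => hu.1.1
  have hqa : a ≤ q := by
    refine le_csInf ⟨b, hbT⟩ fun u hu => ?_
    by_contra hc
    push_neg at hc
    exact absurd (hgm hu.1 ha hc.le) (not_le.mpr hu.2)
  have hqb : q ≤ b := csInf_le hbdd hbT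
  have hqI : q ∈ Icc (0:ℝ) 1 := ⟨hq0, le_trans hqb hb.2⟩
  have hq_up : ∀ s, q < s → s ≤ 1 → g a < g s := by
    intro s hs hs1
    obtain ⟨u, hu, hus⟩ := (csInf_lt_iff hbdd ⟨b, hbT⟩).mp hs
    exact lt_of_lt_of_le hu.2 (hgm hu.1 ⟨le_trans hq0 (le_of_lt (lt_of_le_of_lt
      (csInf_le hbdd hu) hus)), hs1⟩ hus.le)
  have hq_dn : ∀ u, 0 ≤ u → u < q → g u ≤ g a := by
    intro u hu0 huq
    by_contra hc
    push_neg at hc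
    have : u ∈ T := ⟨⟨hu0, le_trans huq.le hqI.2⟩, hc⟩
    exact absurd (csInf_le hbdd this) (not_le.mpr huq)
  refine ⟨q, ⟨hqa, hqb⟩, ?_⟩
  rcases le_or_gt (g q) (g a) with hc | hc
  · -- PSIR
    left
    have hq1 : q < 1 := by
      rcases lt_or_eq_of_le hqI.2 with h | h
      · exact h
      · exfalso
        have : g b ≤ g q := hgm hb hqI (h ▸ hb.2)
        linarith
    exact ⟨⟨hq0, hq1⟩, fun s hs => lt_of_le_of_lt hc (hq_up s hs.1 hs.2)⟩
  · -- PSIL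
    right
    have hq0' : 0 < q := by
      rcases lt_or_eq_of_le hq0 with h | h
      · exact h
      · exfalso
        have h0a : g 0 ≤ g a := hgm ⟨le_rfl, zero_le_one⟩ ha ha.1
        rw [← h] at hc
        linarith
    exact ⟨⟨hq0', hqI.2⟩, fun s hs => lt_of_le_of_lt (hq_dn s hs.1 hs.2) hc⟩

/-- An event of measure `1-p` that is a tail event for every component. -/
def GoodEvt (P : MeasureTheory.Measure Ω) {d : ℕ} (X : Fin d → Ω → ℝ) (p : ℝ)
    (A : Set Ω) : Prop :=
  MeasurableSet A ∧ P A = ENNReal.ofReal (1 - p) ∧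
    ∀ i, ∃ N : Set Ω, P N = 0 ∧
      ∀ ω ∈ A, ω ∉ N → ∀ ω' ∈ Aᶜ, ω' ∉ N → X i ω' ≤ X i ω

variable {P : MeasureTheory.Measure Ω} [MeasureTheory.IsProbabilityMeasure P]
  {d : ℕ} {X : Fin d → Ω → ℝ}

lemma goodEvt_univ : GoodEvt P X 0 univ := by
  refine ⟨MeasurableSet.univ, by simp, fun i => ⟨∅, measure_empty, ?_⟩⟩
  intro ω hω hω' ω' hω'2 hω'3
  simp at hω'2

lemma goodEvt_empty : GoodEvt P X 1 ∅ := by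
  refine ⟨MeasurableSet.empty, by simp, fun i => ⟨∅, measure_empty, ?_⟩⟩
  intro ω hω
  simp at hω

/-- Merge upwards: a good event at level `p` can be rebuilt to contain a good event
at a higher level `q`. -/
lemma goodEvt_merge_up (hP : Atomless P) {p q : ℝ} (hpq : p ≤ q)
    {A L : Set Ω} (hA : GoodEvt P X p A) (hL : GoodEvt P X q L) :
    ∃ B : Set Ω, GoodEvt P X p B ∧ L ⊆ B := by
  classical
  obtain ⟨hAm, hAP, hAt⟩ := hA
  obtain ⟨hLm, hLP, hLt⟩ := hL
  set δ := ENNReal.ofReal (1 - p) - ENNReal.ofReal (1 - q) with hδ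
  have hLPle : ENNReal.ofReal (1 - q) ≤ ENNReal.ofReal (1 - p) :=
    ENNReal.ofReal_le_ofReal (by linarith)
  have hδle : δ ≤ P (A \ L) := by
    have h1 : P A ≤ P (A \ L) + P L := by
      refine le_trans (measure_mono (fun ω h => ?_)) (measure_union_le _ _)
      by_cases hω : ω ∈ L
      · exact Or.inr hω
      · exact Or.inl ⟨h, hω⟩
    rw [hδ, ← hAP, ← hLP]
    exact tsub_le_iff_right.mpr h1
  obtain ⟨M, hML, hMm, hMP⟩ := hP (A \ L) (hAm.diff hLm) δ hδle
  refine ⟨L ∪ M, ⟨hLm.union hMm, ?_, ?_⟩, subset_union_left⟩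
  · have hdisj : Disjoint L M := disjoint_left.mpr fun ω hω hω2 => (hML hω2).2 hω
    rw [measure_union hdisj hMm, hLP, hMP, hδ, add_tsub_cancel_of_le hLPle]
  · intro i
    obtain ⟨NA, hNA0, hNAt⟩ := hAt i
    obtain ⟨NL, hNL0, hNLt⟩ := hLt i
    by_cases hca : P (L \ A) = 0
    · -- L ⊆ A mod null; then (A \ L) \ M is null
      have hLA : P (L ∩ A) = P L := by
        refine le_antisymm (measure_mono inter_subset_left) ?_
        have h3 := measure_union_le (μ := P) (L ∩ A) (L \ A)
        rw [inter_union_diff] at h3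
        calc P L ≤ P (L ∩ A) + P (L \ A) := h3
          _ = P (L ∩ A) := by rw [hca, add_zero]
      have hPAL : P (A \ L) = δ := by
        have h4 : A \ L = A \ (A ∩ L) := by
          ext ω; simp only [mem_diff, mem_inter_iff]; tauto
        rw [h4, measure_diff inter_subset_left (hAm.inter hLm).nullMeasurableSet
          (measure_ne_top _ _), inter_comm, hLA, hAP, hLP]
      have hnull : P ((A \ L) \ M) = 0 := by
        rw [measure_diff hML hMm.nullMeasurableSet (measure_ne_top _ _), hPAL, hMP,
          tsub_self]
      refine ⟨NA ∪ NL ∪ (L \ A) ∪ ((A \ L) \ M),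
        measure_union_null (measure_union_null (measure_union_null hNA0 hNL0) hca) hnull,
        ?_⟩
      intro ω hω hωN ω' hω' hω'N
      simp only [mem_union, not_or] at hωN hω'N
      have hωA : ω ∈ A := by
        rcases hω with h | h
        · by_contra hc
          exact hωN.1.2 ⟨h, hc⟩
        · exact (hML h).1
      have hω'A : ω' ∈ Aᶜ := by
        intro hc
        rcases em (ω' ∈ L) with h | h
        · exact hω' (Or.inl h)
        · exact hω'N.2 ⟨⟨hc, h⟩, fun hM => hω' (Or.inr hM)⟩
      exact hNAt ω hωA hωN.1.1.1 ω' hω'A hω'N.1.1.1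
    · -- P (L \ A) > 0 : chain through a point of L \ A
      obtain ⟨ω'', hω''⟩ : ((L \ A) \ (NA ∪ NL)).Nonempty := by
        refine nonempty_of_measure_ne_zero (μ := P) ?_
        rw [measure_diff_null (measure_union_null hNA0 hNL0)]
        exact hca
      obtain ⟨⟨hω''L, hω''A⟩, hω''N⟩ := hω''
      simp only [mem_union, not_or] at hω''N
      refine ⟨NA ∪ NL, measure_union_null hNA0 hNL0, ?_⟩
      intro ω hω hωN ω' hω' hω'N
      simp only [mem_union, not_or] at hωN hω'N
      have hω'L : ω' ∈ Lᶜ := fun hc => hω' (Or.inl hc)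
      rcases hω with hωL | hωM
      · exact hNLt ω hωL hωN.2 ω' hω'L hω'N.2
      · have hωA : ω ∈ A := (hML hωM).1
        rcases em (ω' ∈ A) with hc | hc
        · have h1 : X i ω' ≤ X i ω'' := hNLt ω'' hω''L hω''N.2 ω' hω'L hω'N.2
          have h2 : X i ω'' ≤ X i ω := hNAt ω hωA hωN.1 ω'' hω''A hω''N.1
          linarith
        · exact hNAt ω hωA hωN.1 ω' hc hω'N.1

/-- Merge downwards: shrink a good event at level `p` into a good event at a
lower level `r`, keeping the common part. -/
lemma goodEvt_merge_down (hP : Atomless P) {p r : ℝ} (hrp : r ≤ p)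
    {B U : Set Ω} (hB : GoodEvt P X p B) (hU : GoodEvt P X r U) :
    ∃ B' : Set Ω, GoodEvt P X p B' ∧ B' ⊆ U ∧ B ∩ U ⊆ B' := by
  classical
  obtain ⟨hBm, hBP, hBt⟩ := hB
  obtain ⟨hUm, hUP, hUt⟩ := hU
  set δ := ENNReal.ofReal (1 - p) - P (B ∩ U) with hδ
  have hBUle : P (B ∩ U) ≤ ENNReal.ofReal (1 - p) := by
    rw [← hBP]; exact measure_mono inter_subset_left
  have hδle : δ ≤ P (U \ B) := by
    have h1 : ENNReal.ofReal (1 - p) ≤ P (U \ B) + P (B ∩ U) := by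
      have h2 : ENNReal.ofReal (1 - p) ≤ P U := by
        rw [hUP]; exact ENNReal.ofReal_le_ofReal (by linarith)
      refine h2.trans (le_trans (measure_mono (fun ω h => ?_)) (measure_union_le _ _))
      by_cases hω : ω ∈ B
      · exact Or.inr ⟨hω, h⟩
      · exact Or.inl ⟨h, hω⟩
    exact tsub_le_iff_right.mpr h1
  obtain ⟨M, hMU, hMm, hMP⟩ := hP (U \ B) (hUm.diff hBm) δ hδle
  refine ⟨(B ∩ U) ∪ M, ⟨(hBm.inter hUm).union hMm, ?_, ?_⟩,
    union_subset inter_subset_right (fun ω h => (hMU h).1), subset_union_left⟩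
  · have hdisj : Disjoint (B ∩ U) M :=
      disjoint_left.mpr fun ω hω hω2 => (hMU hω2).2 hω.1
    rw [measure_union hdisj hMm, hMP, hδ, add_tsub_cancel_of_le hBUle]
  · intro i
    obtain ⟨NB, hNB0, hNBt⟩ := hBt i
    obtain ⟨NU, hNU0, hNUt⟩ := hUt i
    by_cases hcb : P (B \ U) = 0
    · -- B ⊆ U mod null; then M is null
      have hBU : P (B ∩ U) = P B := by
        refine le_antisymm (measure_mono inter_subset_left) ?_
        have h3 := measure_union_le (μ := P) (B ∩ U) (B \ U)
        rw [inter_union_diff] at h3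
        calc P B ≤ P (B ∩ U) + P (B \ U) := h3
          _ = P (B ∩ U) := by rw [hcb, add_zero]
      have hMnull : P M = 0 := by
        rw [hMP, hδ, hBU, hBP, tsub_self]
      refine ⟨NB ∪ NU ∪ (B \ U) ∪ M,
        measure_union_null (measure_union_null (measure_union_null hNB0 hNU0) hcb) hMnull,
        ?_⟩
      intro ω hω hωN ω' hω' hω'N
      simp only [mem_union, not_or] at hωN hω'N
      have hωB : ω ∈ B := by
        rcases hω with h | h
        · exact h.1
        · exact absurd h hωN.2
      have hω'B : ω' ∈ Bᶜ := by
        intro hc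
        rcases em (ω' ∈ U) with h | h
        · exact hω' (Or.inl ⟨hc, h⟩)
        · exact hω'N.1.2 ⟨hc, h⟩
      exact hNBt ω hωB hωN.1.1.1 ω' hω'B hω'N.1.1.1
    · -- P (B \ U) > 0 : chain through a point of B \ U
      obtain ⟨ω'', hω''⟩ : ((B \ U) \ (NB ∪ NU)).Nonempty := by
        refine nonempty_of_measure_ne_zero (μ := P) ?_
        rw [measure_diff_null (measure_union_null hNB0 hNU0)]
        exact hcb
      obtain ⟨⟨hω''B, hω''U⟩, hω''N⟩ := hω''
      simp only [mem_union, not_or] at hω''N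
      refine ⟨NB ∪ NU, measure_union_null hNB0 hNU0, ?_⟩
      intro ω hω hωN ω' hω' hω'N
      simp only [mem_union, not_or] at hωN hω'N
      rcases hω with hωBU | hωM
      · rcases em (ω' ∈ B) with hc | hc
        · have hω'U : ω' ∈ Uᶜ := fun hcU => hω' (Or.inl ⟨hc, hcU⟩)
          exact hNUt ω hωBU.2 hωN.2 ω' hω'U hω'N.2
        · exact hNBt ω hωBU.1 hωN.1 ω' hc hω'N.1
      · have hωU : ω ∈ U := (hMU hωM).1
        rcases em (ω' ∈ U) with hcU | hcU
        · have hω'B : ω' ∈ Bᶜ := fun hcB => hω' (Or.inl ⟨hcB, hcU⟩)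
          have h1 : X i ω' ≤ X i ω'' := hNBt ω'' hω''B hω''N.1 ω' hω'B hω'N.1
          have h2 : X i ω'' ≤ X i ω := hNUt ω hωU hωN.2 ω'' hω''U hω''N.2
          linarith
        · exact hNUt ω hωU hωN.2 ω' hcU hω'N.2

/-- Fit a good event at level `p` between two nested good events. -/
lemma goodEvt_fit (hP : Atomless P) {p q r : ℝ} (hrp : r ≤ p) (hpq : p ≤ q)
    {A L U : Set Ω} (hA : GoodEvt P X p A) (hL : GoodEvt P X q L)
    (hU : GoodEvt P X r U) (hLU : L ⊆ U) :
    ∃ B : Set Ω, GoodEvt P X p B ∧ L ⊆ B ∧ B ⊆ U := by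
  obtain ⟨B1, hB1, hLB1⟩ := goodEvt_merge_up hP hpq hA hL
  obtain ⟨B, hB, hBU, hB1U⟩ := goodEvt_merge_down hP hrp hB1 hU
  exact ⟨B, hB, fun ω hω => hB1U ⟨hLB1 hω, hLU hω⟩, hBU⟩

end Bwd1
section Bwd2
variable {Ω : Type*} [MeasurableSpace Ω]

open scoped Classical in
/-- Choose a good event at level `e n` nested with the previously chosen ones. -/
noncomputable def pickEvt (P : MeasureTheory.Measure Ω) {d : ℕ} (X : Fin d → Ω → ℝ)
    (e : ℕ → ℝ) (prev : ℕ → Set Ω) (n : ℕ) : Set Ω :=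
  if h : ∃ B, GoodEvt P X (e n) B ∧
      ∀ m < n, (e m ≤ e n → B ⊆ prev m) ∧ (e n ≤ e m → prev m ⊆ B)
  then h.choose else ∅

/-- Iteratively constructed nested family of good events. -/
noncomputable def famAux (P : MeasureTheory.Measure Ω) {d : ℕ} (X : Fin d → Ω → ℝ)
    (e : ℕ → ℝ) : ℕ → ℕ → Set Ω
  | 0 => fun _ => ∅
  | (n+1) => fun m => if m = n then pickEvt P X e (famAux P X e n) n else famAux P X e n m

variable {P : MeasureTheory.Measure Ω} [MeasureTheory.IsProbabilityMeasure P]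
  {d : ℕ} {X : Fin d → Ω → ℝ} {e : ℕ → ℝ}

lemma famAux_stable (k n m : ℕ) (hm : m < n) (hk : n ≤ k) :
    famAux P X e k m = famAux P X e n m := by
  induction k with
  | zero => omega
  | succ k ih =>
    rcases Nat.lt_or_ge k n with h | h
    · have : n = k + 1 := by omega
      rw [this]
    · have hmk : m ≠ k := by omega
      show (if m = k then _ else famAux P X e k m) = _
      rw [if_neg hmk, ih (by omega)]

lemma famAux_inv (hP : Atomless P) (hI : ∀ n, e n ∈ Icc (0:ℝ) 1)
    (hRaw : ∀ n, ∃ A, GoodEvt P X (e n) A) (n : ℕ) :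
    (∀ m < n, GoodEvt P X (e m) (famAux P X e n m)) ∧
      (∀ m < n, ∀ m' < n, e m' ≤ e m → famAux P X e n m ⊆ famAux P X e n m') := by
  classical
  induction n with
  | zero => exact ⟨fun m hm => absurd hm (Nat.not_lt_zero m), fun m hm => absurd hm (Nat.not_lt_zero m)⟩
  | succ n ih =>
    obtain ⟨ihG, ihN⟩ := ih
    -- existence of the next event
    have hex : ∃ B, GoodEvt P X (e n) B ∧
        ∀ m < n, (e m ≤ e n → B ⊆ famAux P X e n m) ∧
          (e n ≤ e m → famAux P X e n m ⊆ B) := by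
      by_cases hdup : ∃ m, m < n ∧ e m = e n
      · obtain ⟨m0, hm0n, hm0e⟩ := hdup
        refine ⟨famAux P X e n m0, hm0e ▸ ihG m0 hm0n, fun m hm => ⟨fun hle => ?_, fun hle => ?_⟩⟩
        · exact ihN m0 hm0n m hm (hm0e ▸ hle)
        · exact ihN m hm m0 hm0n (hm0e ▸ hle)
      · push_neg at hdup
        set TU := (Finset.range n).filter (fun m => e m < e n) with hTU
        set TL := (Finset.range n).filter (fun m => e n < e m) with hTL
        obtain ⟨A, hA⟩ := hRaw n
        -- the upper bound event U at level r
        have hU : ∃ (U : Set Ω) (r : ℝ), GoodEvt P X r U ∧ r ≤ e n ∧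
            (∀ m < n, e m < e n → famAux P X e n m ⊇ U → True) ∧
            (∀ m < n, e m < e n → U ⊆ famAux P X e n m) ∧
            (∀ m1 ∈ TL, famAux P X e n m1 ⊆ U) := by
          rcases Finset.eq_empty_or_nonempty TU with hTUe | hTUne
          · refine ⟨univ, 0, goodEvt_univ, (hI n).1, fun _ _ _ _ => trivial, fun m hm hlt => ?_, fun m1 _ => subset_univ _⟩
            exfalso
            have : m ∈ TU := Finset.mem_filter.mpr ⟨Finset.mem_range.mpr hm, hlt⟩
            rw [hTUe] at this
            exact absurd this (Finset.notMem_empty m)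
          · obtain ⟨m2, hm2TU, hm2max⟩ := Finset.exists_max_image TU e hTUne
            have hm2n : m2 < n := Finset.mem_range.mp (Finset.mem_filter.mp hm2TU).1
            have hm2lt : e m2 < e n := (Finset.mem_filter.mp hm2TU).2
            refine ⟨famAux P X e n m2, e m2, ihG m2 hm2n, hm2lt.le, fun _ _ _ _ => trivial,
              fun m hm hlt => ?_, fun m1 hm1 => ?_⟩
            · have hmTU : m ∈ TU := Finset.mem_filter.mpr ⟨Finset.mem_range.mpr hm, hlt⟩
              exact ihN m2 hm2n m hm (hm2max m hmTU)
            · have hm1n : m1 < n := Finset.mem_range.mp (Finset.mem_filter.mp hm1).1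
              have hm1gt : e n < e m1 := (Finset.mem_filter.mp hm1).2
              exact ihN m1 hm1n m2 hm2n (le_trans hm2lt.le hm1gt.le)
        obtain ⟨U, r, hUg, hrle, _, hUsub, hLsubU⟩ := hU
        have hL : ∃ (L : Set Ω) (q : ℝ), GoodEvt P X q L ∧ e n ≤ q ∧ L ⊆ U ∧
            (∀ m < n, e n < e m → famAux P X e n m ⊆ L) := by
          rcases Finset.eq_empty_or_nonempty TL with hTLe | hTLne
          · refine ⟨∅, 1, goodEvt_empty, (hI n).2, empty_subset _, fun m hm hlt => ?_⟩
            exfalso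
            have : m ∈ TL := Finset.mem_filter.mpr ⟨Finset.mem_range.mpr hm, hlt⟩
            rw [hTLe] at this
            exact absurd this (Finset.notMem_empty m)
          · obtain ⟨m1, hm1TL, hm1min⟩ := Finset.exists_min_image TL e hTLne
            have hm1n : m1 < n := Finset.mem_range.mp (Finset.mem_filter.mp hm1TL).1
            have hm1gt : e n < e m1 := (Finset.mem_filter.mp hm1TL).2
            refine ⟨famAux P X e n m1, e m1, ihG m1 hm1n, hm1gt.le, hLsubU m1 hm1TL,
              fun m hm hlt => ?_⟩
            have hmTL : m ∈ TL := Finset.mem_filter.mpr ⟨Finset.mem_range.mpr hm, hlt⟩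
            exact ihN m hm m1 hm1n (hm1min m hmTL)
        obtain ⟨L, q, hLg, hqge, hLU, hLsup⟩ := hL
        obtain ⟨B, hBg, hLB, hBU⟩ := goodEvt_fit hP hrle hqge hA hLg hUg hLU
        refine ⟨B, hBg, fun m hm => ⟨fun hle => ?_, fun hle => ?_⟩⟩
        · have hlt : e m < e n := lt_of_le_of_ne hle (hdup m hm)
          exact hBU.trans (hUsub m hm hlt)
        · have hlt : e n < e m := lt_of_le_of_ne hle (fun h => hdup m hm h.symm)
          exact (hLsup m hm hlt).trans hLB
    -- now unfold the definition
    have hpick : famAux P X e (n+1) n = hex.choose := by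
      show (if n = n then pickEvt P X e (famAux P X e n) n else _) = _
      rw [if_pos rfl, pickEvt, dif_pos hex]
    have hkeep : ∀ m < n, famAux P X e (n+1) m = famAux P X e n m := by
      intro m hm
      show (if m = n then _ else famAux P X e n m) = _
      rw [if_neg (by omega)]
    obtain ⟨hcG, hcN⟩ := hex.choose_spec
    constructor
    · intro m hm
      rcases Nat.lt_or_ge m n with h | h
      · rw [hkeep m h]; exact ihG m h
      · have : m = n := by omega
        subst this
        rw [hpick]; exact hcG
    · intro m hm m' hm' hle
      rcases Nat.lt_or_ge m n with h | h <;> rcases Nat.lt_or_ge m' n with h' | h'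
      · rw [hkeep m h, hkeep m' h']; exact ihN m h m' h' hle
      · have : m' = n := by omega
        subst this
        rw [hkeep m h, hpick]
        exact (hcN m h).2 hle
      · have : m = n := by omega
        subst this
        rw [hkeep m' h', hpick]
        exact (hcN m' h').1 hle
      · have h1 : m = n := by omega
        have h2 : m' = n := by omega
        subst h1; subst h2
        exact subset_refl _
end Bwd2
section Bwd3
variable {Ω : Type*} [MeasurableSpace Ω] {P : MeasureTheory.Measure Ω}
  [MeasureTheory.IsProbabilityMeasure P] {d : ℕ} {X : Fin d → Ω → ℝ}
  {e : ℕ → ℝ} {fam : ℕ → Set Ω}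

/-- The "level" random variable associated with a nested family. -/
noncomputable def VFun (e : ℕ → ℝ) (fam : ℕ → Set Ω) : Ω → ℝ :=
  fun ω => ⨆ n, Set.indicator (fam n) (fun _ => e n) ω

lemma vfun_bddAbove (hI : ∀ n, e n ∈ Icc (0:ℝ) 1) (ω : Ω) :
    BddAbove (range fun n => Set.indicator (fam n) (fun _ => e n) ω) := by
  refine ⟨1, fun y hy => ?_⟩
  obtain ⟨n, rfl⟩ := hy
  by_cases h : ω ∈ fam n
  · simpa [indicator_of_mem h] using (hI n).2
  · simp [indicator_of_notMem h]

lemma vfun_nonneg (hI : ∀ n, e n ∈ Icc (0:ℝ) 1) (ω : Ω) : 0 ≤ VFun e fam ω := by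
  refine le_trans ?_ (le_ciSup (vfun_bddAbove hI ω) 0)
  by_cases h : ω ∈ fam 0
  · simpa [indicator_of_mem h] using (hI 0).1
  · simp [indicator_of_notMem h]

lemma vfun_le_one (hI : ∀ n, e n ∈ Icc (0:ℝ) 1) (ω : Ω) : VFun e fam ω ≤ 1 := by
  refine ciSup_le fun n => ?_
  by_cases h : ω ∈ fam n
  · simpa [indicator_of_mem h] using (hI n).2
  · simp [indicator_of_notMem h]

lemma vfun_ge_of_mem (hI : ∀ n, e n ∈ Icc (0:ℝ) 1) {ω : Ω} {n : ℕ} (h : ω ∈ fam n) :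
    e n ≤ VFun e fam ω := by
  refine le_trans ?_ (le_ciSup (vfun_bddAbove hI ω) n)
  simp [indicator_of_mem h]

lemma vfun_lt_iff (hI : ∀ n, e n ∈ Icc (0:ℝ) 1) {x : ℝ} (hx : 0 ≤ x) (ω : Ω) :
    x < VFun e fam ω ↔ ∃ n, ω ∈ fam n ∧ x < e n := by
  rw [VFun, lt_ciSup_iff (vfun_bddAbove hI ω)]
  constructor
  · rintro ⟨n, hn⟩
    by_cases h : ω ∈ fam n
    · rw [indicator_of_mem h] at hn; exact ⟨n, h, hn⟩
    · rw [indicator_of_notMem h] at hn; exact absurd hn (not_lt.mpr hx)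
  · rintro ⟨n, hn, hlt⟩
    exact ⟨n, by simpa [indicator_of_mem hn] using hlt⟩

lemma vfun_gt_set (hI : ∀ n, e n ∈ Icc (0:ℝ) 1) {x : ℝ} (hx : 0 ≤ x) :
    {ω | x < VFun e fam ω} = ⋃ n, (if x < e n then fam n else ∅) := by
  ext ω
  simp only [mem_setOf_eq, mem_iUnion]
  rw [vfun_lt_iff hI hx]
  constructor
  · rintro ⟨n, hn, hlt⟩
    exact ⟨n, by rw [if_pos hlt]; exact hn⟩
  · rintro ⟨n, hn⟩
    by_cases h : x < e n
    · rw [if_pos h] at hn; exact ⟨n, hn, h⟩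
    · rw [if_neg h] at hn; exact absurd hn (notMem_empty ω)

lemma vfun_measurable (hI : ∀ n, e n ∈ Icc (0:ℝ) 1)
    (hM : ∀ n, MeasurableSet (fam n)) : Measurable (VFun e fam) := by
  classical
  refine measurable_of_Ioi fun x => ?_
  rcases lt_or_ge x 0 with hx | hx
  · have : VFun e fam ⁻¹' Ioi x = univ := by
      ext ω
      simp only [mem_preimage, mem_Ioi, mem_univ, iff_true]
      exact lt_of_lt_of_le hx (vfun_nonneg hI ω)
    rw [this]; exact MeasurableSet.univ
  · have : VFun e fam ⁻¹' Ioi x = ⋃ n, (if x < e n then fam n else ∅) := by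
      rw [← vfun_gt_set hI hx]; rfl
    rw [this]
    refine MeasurableSet.iUnion fun n => ?_
    split_ifs
    · exact hM n
    · exact MeasurableSet.empty

lemma vfun_gt_measure (hI : ∀ n, e n ∈ Icc (0:ℝ) 1)
    (hG : ∀ n, GoodEvt P X (e n) (fam n))
    (hN : ∀ m n, e m ≤ e n → fam n ⊆ fam m) {x : ℝ} (hx : 0 ≤ x) :
    P {ω | x < VFun e fam ω} =
      ⨆ n, (if x < e n then ENNReal.ofReal (1 - e n) else 0) := by
  classical
  rw [vfun_gt_set hI hx]
  have hdir : Directed (fun a b => a ⊆ b) (fun n => if x < e n then fam n else ∅) := by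
    intro n m
    by_cases hn : x < e n <;> by_cases hm : x < e m
    · rcases le_total (e n) (e m) with h | h
      · refine ⟨n, subset_refl _, ?_⟩
        simp only [if_pos hn, if_pos hm]
        exact hN n m h
      · refine ⟨m, ?_, subset_refl _⟩
        simp only [if_pos hn, if_pos hm]
        exact hN m n h
    · refine ⟨n, subset_refl _, ?_⟩
      simp only [if_neg hm]
      exact empty_subset _
    · refine ⟨m, ?_, subset_refl _⟩
      simp only [if_neg hn]
      exact empty_subset _
    · refine ⟨n, subset_refl _, ?_⟩
      simp only [if_neg hn, if_neg hm]
      exact subset_refl _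
  rw [hdir.measure_iUnion]
  congr 1
  ext n
  split_ifs with h
  · exact (hG n).2.1
  · exact measure_empty

end Bwd3
section Bwd4
variable {Ω : Type*} [MeasurableSpace Ω] {P : MeasureTheory.Measure Ω}
  [MeasureTheory.IsProbabilityMeasure P] {d : ℕ} {X : Fin d → Ω → ℝ}
  {e : ℕ → ℝ} {fam : ℕ → Set Ω} {g : ℝ → ℝ}

/-- Right-continuous version of `g`, suitably truncated to `[0,1]`. -/
noncomputable def grFun (g : ℝ → ℝ) (x : ℝ) : ℝ :=
  if max x 0 < 1 then sInf (g '' Ioc (max x 0) 1) else g 1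

/-- `p0F g t = inf ({u ∈ [0,1] | t < g u} ∪ {1})`. -/
noncomputable def p0F (g : ℝ → ℝ) (t : ℝ) : ℝ :=
  sInf ({u : ℝ | u ∈ Icc (0:ℝ) 1 ∧ t < g u} ∪ {1})

lemma gr_img_bdd (hgm : MonotoneOn g (Icc (0:ℝ) 1)) {x : ℝ} (hx0 : 0 ≤ x) :
    BddBelow (g '' Ioc x 1) := by
  refine ⟨g 0, fun y hy => ?_⟩
  obtain ⟨u, hu, rfl⟩ := hy
  exact hgm ⟨le_rfl, zero_le_one⟩ ⟨le_trans hx0 hu.1.le, hu.2⟩ (le_trans hx0 hu.1.le)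

lemma grFun_of_lt {x : ℝ} (hx0 : 0 ≤ x) (hx1 : x < 1) :
    grFun g x = sInf (g '' Ioc x 1) := by
  rw [grFun, max_eq_left hx0, if_pos hx1]

lemma grFun_of_ge {x : ℝ} (hx1 : 1 ≤ x) : grFun g x = g 1 := by
  rw [grFun, if_neg]
  push_neg
  exact le_trans hx1 (le_max_left _ _)

lemma grFun_mono (hgm : MonotoneOn g (Icc (0:ℝ) 1)) : Monotone (grFun g) := by
  intro a b hab
  have hab' : max a 0 ≤ max b 0 := max_le_max hab le_rfl
  have ha0 : (0:ℝ) ≤ max a 0 := le_max_right _ _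
  have hb0 : (0:ℝ) ≤ max b 0 := le_max_right _ _
  unfold grFun
  split_ifs with h1 h2 h2
  · refine csInf_le_csInf (gr_img_bdd hgm ha0) ?_ (image_mono (Ioc_subset_Ioc_left hab'))
    exact ⟨g 1, 1, ⟨h2, le_rfl⟩, rfl⟩
  · exact csInf_le (gr_img_bdd hgm ha0) ⟨1, ⟨h1, le_rfl⟩, rfl⟩
  · exact absurd (lt_of_le_of_lt hab' h2) h1
  · exact le_rfl

lemma p0_nonneg : 0 ≤ p0F g t := by
  refine le_csInf ⟨1, Or.inr rfl⟩ fun u hu => ?_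
  rcases hu with h | h
  · exact h.1.1
  · rw [mem_singleton_iff] at h; rw [h]; exact zero_le_one

lemma p0_bddBelow : BddBelow ({u : ℝ | u ∈ Icc (0:ℝ) 1 ∧ t < g u} ∪ {1}) := by
  refine ⟨0, fun u hu => ?_⟩
  rcases hu with h | h
  · exact h.1.1
  · rw [mem_singleton_iff] at h; rw [h]; exact zero_le_one

lemma p0_le_one : p0F g t ≤ 1 := csInf_le p0_bddBelow (Or.inr rfl)

lemma p0_up (hgm : MonotoneOn g (Icc (0:ℝ) 1)) {t u : ℝ} (h : p0F g t < u)
    (hu1 : u ≤ 1) : t < g u := by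
  obtain ⟨v, hv, hvu⟩ := (csInf_lt_iff p0_bddBelow ⟨1, Or.inr rfl⟩).mp h
  rcases hv with hv | hv
  · exact lt_of_lt_of_le hv.2 (hgm hv.1 ⟨le_trans hv.1.1 hvu.le, hu1⟩ hvu.le)
  · rw [mem_singleton_iff] at hv
    rw [hv] at hvu
    linarith
lemma p0_dn (hgm : MonotoneOn g (Icc (0:ℝ) 1)) {t u : ℝ} (hu0 : 0 ≤ u)
    (h : u < p0F g t) : g u ≤ t := by
  by_contra hc
  push_neg at hc
  have : u ∈ ({u : ℝ | u ∈ Icc (0:ℝ) 1 ∧ t < g u} ∪ {1}) :=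
    Or.inl ⟨⟨hu0, le_trans h.le p0_le_one⟩, hc⟩
  exact absurd (csInf_le p0_bddBelow this) (not_le.mpr h)

lemma ennreal_ofReal_le_of_forall_sub {S : ENNReal} {c : ℝ} (hS : S ≠ ⊤)
    (h : ∀ ε : ℝ, 0 < ε → ENNReal.ofReal (c - ε) ≤ S) : ENNReal.ofReal c ≤ S := by
  rcases le_or_gt c 0 with hc | hc
  · rw [ENNReal.ofReal_eq_zero.mpr hc]; exact zero_le
  · by_contra hcon
    push_neg at hcon
    set s := S.toReal with hs
    have hs0 : 0 ≤ s := ENNReal.toReal_nonneg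
    have hsc : s < c := by
      have := ENNReal.toReal_strict_mono ENNReal.ofReal_ne_top hcon
      rwa [ENNReal.toReal_ofReal hc.le] at this
    have hε : (0:ℝ) < (c - s)/2 := by linarith
    have := h _ hε
    have h2 : c - (c - s)/2 ≤ s := by
      rw [← ENNReal.toReal_ofReal (show (0:ℝ) ≤ c - (c-s)/2 by linarith)]
      exact ENNReal.toReal_mono hS this
    linarith

/-- The central CDF computation for `grFun g ∘ VFun`. -/
lemma cdf_grV (hgm : MonotoneOn g (Icc (0:ℝ) 1))
    (hI : ∀ n, e n ∈ Icc (0:ℝ) 1)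
    (hG : ∀ n, GoodEvt P X (e n) (fam n))
    (hN : ∀ m n, e m ≤ e n → fam n ⊆ fam m)
    (hdense : ∀ ψ ∈ PSI g, ∀ ε : ℝ, 0 < ε → ∃ n, |e n - ψ| < ε)
    (t : ℝ) :
    P {ω | t < grFun g (VFun e fam ω)} = ENNReal.ofReal (1 - p0F g t) := by
  classical
  set q := p0F g t with hq
  have hq0 : 0 ≤ q := p0_nonneg
  have hq1 : q ≤ 1 := p0_le_one
  have hVmeas : Measurable (VFun e fam) := vfun_measurable hI (fun n => (hG n).1)
  have hV0 : ∀ ω, 0 ≤ VFun e fam ω := vfun_nonneg hI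
  have hV1 : ∀ ω, VFun e fam ω ≤ 1 := vfun_le_one hI
  -- claim 1 : below q, grFun g ≤ t
  have claim1 : ∀ x, 0 ≤ x → x < q → grFun g x ≤ t := by
    intro x hx0 hxq
    have hx1 : x < 1 := lt_of_lt_of_le hxq hq1
    rw [grFun_of_lt hx0 hx1]
    set u := (x + q)/2 with hu
    have hxu : x < u := by rw [hu]; linarith
    have huq : u < q := by rw [hu]; linarith
    have hu0 : 0 ≤ u := le_trans hx0 hxu.le
    have hu1 : u ≤ 1 := le_trans huq.le hq1
    refine le_trans (csInf_le (gr_img_bdd hgm hx0) ⟨u, ⟨hxu, hu1⟩, rfl⟩) ?_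
    exact p0_dn hgm hu0 huq
  -- claim 2 : above q, grFun g > t
  have claim2 : ∀ x, x ≤ 1 → q < x → t < grFun g x := by
    intro x hx1 hqx
    have hx0 : 0 ≤ x := le_trans hq0 hqx.le
    rcases lt_or_eq_of_le hx1 with hx1' | hx1'
    · rw [grFun_of_lt hx0 hx1']
      set u' := (q + x)/2 with hu'
      have hqu : q < u' := by rw [hu']; linarith
      have hux : u' < x := by rw [hu']; linarith
      have hu1 : u' ≤ 1 := le_trans hux.le hx1
      have hgt : t < g u' := p0_up hgm hqu hu1
      refine lt_of_lt_of_le hgt (le_csInf ⟨g 1, 1, ⟨hx1', le_rfl⟩, rfl⟩ ?_)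
      rintro y ⟨u, hu, rfl⟩
      exact hgm ⟨le_trans hq0 hqu.le, hu1⟩ ⟨le_trans hx0 hu.1.le, hu.2⟩
        (le_trans hux.le hu.1.le)
    · rw [hx1', grFun_of_ge le_rfl]
      exact p0_up hgm (hx1' ▸ hqx) le_rfl
  -- the supremum expression
  set ST : ℝ → ENNReal := fun x => ⨆ n, (if x < e n then ENNReal.ofReal (1 - e n) else 0)
    with hST
  have hSTle1 : ∀ x, ST x ≤ 1 := by
    intro x
    refine iSup_le fun n => ?_
    split_ifs
    · exact ENNReal.ofReal_le_one.mpr (by linarith [(hI n).1])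
    · exact zero_le
  have hSTfin : ∀ x, ST x ≠ ⊤ := fun x => ne_top_of_le_ne_top ENNReal.one_ne_top (hSTle1 x)
  have hSTub : ∀ x, ST x ≤ ENNReal.ofReal (1 - x) := by
    intro x
    refine iSup_le fun n => ?_
    split_ifs with h
    · exact ENNReal.ofReal_le_ofReal (by linarith)
    · exact zero_le
  -- approximation from PSI points
  have hSTapprox : ∀ x, 0 ≤ x → ∀ ψ, ψ ∈ PSI g → x < ψ →
      ENNReal.ofReal (1 - ψ) ≤ ST x := by
    intro x hx0 ψ hψ hxψ
    refine ennreal_ofReal_le_of_forall_sub (hSTfin x) fun ε hε => ?_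
    obtain ⟨n, hn⟩ := hdense ψ hψ (min (ψ - x) ε) (lt_min (by linarith) hε)
    rw [abs_lt] at hn
    have h1 : x < e n := by
      have := hn.1
      have := min_le_left (ψ - x) ε
      linarith
    have h2 : e n < ψ + ε := by
      have := hn.2
      have := min_le_right (ψ - x) ε
      linarith
    refine le_trans ?_ (le_iSup _ n)
    rw [if_pos h1]
    exact ENNReal.ofReal_le_ofReal (by linarith)
  rcases lt_or_ge t (grFun g q) with hA | hB
  · -- CASE A : the set is {q ≤ V}
    have hset : {ω | t < grFun g (VFun e fam ω)} = {ω | q ≤ VFun e fam ω} := by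
      ext ω
      simp only [mem_setOf_eq]
      constructor
      · intro h
        by_contra hc
        push_neg at hc
        exact absurd h (not_lt.mpr (claim1 _ (hV0 ω) hc))
      · intro h
        exact lt_of_lt_of_le hA (grFun_mono hgm h)
    rw [hset]
    rcases eq_or_lt_of_le hq0 with hq0' | hq0'
    · have : {ω | q ≤ VFun e fam ω} = univ := by
        ext ω; simp only [mem_setOf_eq, mem_univ, iff_true]
        rw [← hq0']; exact hV0 ω
      rw [this, measure_univ, ← hq0']
      norm_num
    · -- q > 0 : q is a PSI point
      have hqPSI : q ∈ PSI g := by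
        rcases le_or_gt (g q) t with hgq | hgq
        · left
          have hq1' : q < 1 := by
            rcases lt_or_eq_of_le hq1 with h | h
            · exact h
            · exfalso
              rw [h] at hgq
              rw [h, grFun_of_ge le_rfl] at hA
              exact absurd hA (not_lt.mpr hgq)
          exact ⟨⟨hq0, hq1'⟩, fun s hs => lt_of_le_of_lt hgq (p0_up hgm hs.1 hs.2)⟩
        · right
          exact ⟨⟨hq0', hq1⟩, fun s hs => lt_of_le_of_lt (p0_dn hgm hs.1 hs.2) hgq⟩
      set xk : ℕ → ℝ := fun k => max 0 (q - 1/(k+1)) with hxk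
      have hxk0 : ∀ k, 0 ≤ xk k := fun k => le_max_left _ _
      have hxklt : ∀ k, xk k < q := by
        intro k
        refine max_lt hq0' ?_
        have : (0:ℝ) < 1/(k+1) := by positivity
        linarith
      have hseteq : {ω | q ≤ VFun e fam ω} = ⋂ k, {ω | xk k < VFun e fam ω} := by
        ext ω
        simp only [mem_iInter, mem_setOf_eq]
        constructor
        · intro h k; exact lt_of_lt_of_le (hxklt k) h
        · intro h
          by_contra hc
          push_neg at hc
          obtain ⟨k, hk⟩ := exists_nat_one_div_lt (show (0:ℝ) < q - VFun e fam ω by linarith)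
          have h2 : q - 1/(k+1) ≤ xk k := le_max_right _ _
          have := h k
          linarith
      rw [hseteq]
      have hmeas : ∀ k : ℕ, MeasurableSet {ω | xk k < VFun e fam ω} :=
        fun k => measurableSet_lt measurable_const hVmeas
      have hanti : Antitone (fun k : ℕ => {ω | xk k < VFun e fam ω}) := by
        intro a b hab
        have hxab : xk a ≤ xk b := by
          refine max_le_max le_rfl ?_
          have hab2 : (a:ℝ) ≤ b := Nat.cast_le.mpr hab
          have : (1:ℝ)/(b+1) ≤ 1/(a+1) :=
            one_div_le_one_div_of_le (by positivity) (by linarith)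
          linarith
        exact fun ω h => lt_of_le_of_lt hxab h
      rw [Directed.measure_iInter (fun k => (hmeas k).nullMeasurableSet)
        (hanti.directed_ge) ⟨0, measure_ne_top _ _⟩]
      have hPk : ∀ k : ℕ, P {ω | xk k < VFun e fam ω} = ST (xk k) := by
        intro k
        rw [vfun_gt_measure hI hG hN (hxk0 k)]
      simp_rw [hPk]
      refine le_antisymm ?_ ?_
      · -- upper bound
        by_contra hcon
        push_neg at hcon
        set c := ⨅ k, ST (xk k) with hc
        have hcfin : c ≠ ⊤ := ne_top_of_le_ne_top (hSTfin (xk 0)) (iInf_le _ 0)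
        have hct : 1 - q < c.toReal := by
          have := ENNReal.toReal_strict_mono hcfin hcon
          rwa [ENNReal.toReal_ofReal (by linarith)] at this
      -- each xk k ≤ 1 - c.toReal
        have hxkle : ∀ k, xk k ≤ 1 - c.toReal := by
          intro k
          have h1 : c ≤ ENNReal.ofReal (1 - xk k) := le_trans (iInf_le _ k) (hSTub _)
          have h2 : c.toReal ≤ 1 - xk k := by
            rw [← ENNReal.toReal_ofReal (show (0:ℝ) ≤ 1 - xk k by
              have := hxklt k; linarith [hq1])]
            exact ENNReal.toReal_mono ENNReal.ofReal_ne_top h1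
          linarith
        obtain ⟨k, hk⟩ := exists_nat_one_div_lt (show (0:ℝ) < q - (1 - c.toReal) by linarith)
        have := hxkle k
        have h3 : q - 1/(k+1) ≤ xk k := le_max_right _ _
        linarith
      · -- lower bound
        refine le_iInf fun k => ?_
        exact le_trans (ENNReal.ofReal_le_ofReal le_rfl) (hSTapprox (xk k) (hxk0 k) q hqPSI (hxklt k))
  · -- CASE B : the set is {q < V}
    have hset : {ω | t < grFun g (VFun e fam ω)} = {ω | q < VFun e fam ω} := by
      ext ω
      simp only [mem_setOf_eq]
      constructor
      · intro h
        by_contra hc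
        push_neg at hc
        exact absurd h (not_lt.mpr (le_trans (grFun_mono hgm hc) hB))
      · intro h
        exact claim2 _ (hV1 ω) h
    rw [hset, vfun_gt_measure hI hG hN hq0]
    refine le_antisymm (hSTub q) ?_
    rcases lt_or_eq_of_le hq1 with hq1' | hq1'
    · -- q < 1 : PSI accumulates on the right of q
      refine ennreal_ofReal_le_of_forall_sub (hSTfin q) fun ε hε => ?_
      -- find a PSI point in (q, q + ε]
      set b := min (q + ε/2) 1 with hb
      have hqb : q < b := lt_min (by linarith) hq1'
      have hb1 : b ≤ 1 := min_le_right _ _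
      have hb0 : 0 ≤ b := le_trans hq0 hqb.le
      have hgb : t < g b := p0_up hgm hqb hb1
      have hgrq : sInf (g '' Ioc q 1) ≤ t := by
        rw [← grFun_of_lt hq0 hq1']; exact hB
      have hlt : sInf (g '' Ioc q 1) < g b := lt_of_le_of_lt hgrq hgb
      obtain ⟨y, ⟨a', ha', rfl⟩, hya⟩ :=
        (csInf_lt_iff (gr_img_bdd hgm hq0) ⟨g 1, 1, ⟨hq1', le_rfl⟩, rfl⟩).mp hlt
      have ha'b : a' < b := by
        by_contra hc
        push_neg at hc
        exact absurd (hgm ⟨hb0, hb1⟩ ⟨le_trans hq0 ha'.1.le, ha'.2⟩ hc) (not_le.mpr hya)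
      obtain ⟨ψ, hψI, hψPSI⟩ := psi_between hgm ⟨le_trans hq0 ha'.1.le, ha'.2⟩ ⟨hb0, hb1⟩ hya
      have hqψ : q < ψ := lt_of_lt_of_le ha'.1 hψI.1
      have hψb : ψ ≤ q + ε/2 := le_trans hψI.2 (min_le_left _ _)
      have := hSTapprox q hq0 ψ hψPSI hqψ
      exact le_trans (ENNReal.ofReal_le_ofReal (by linarith)) this
    · -- q = 1 : nothing to prove
      rw [← hq1']
      simp
end Bwd4
section Bwd5
variable {Ω : Type*} [MeasurableSpace Ω] {P : MeasureTheory.Measure Ω}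
  [MeasureTheory.IsProbabilityMeasure P] {d : ℕ} {X : Fin d → Ω → ℝ}
  {e : ℕ → ℝ} {fam : ℕ → Set Ω} {g : ℝ → ℝ} {Z : Ω → ℝ}

/-- From the CDF identity to the CDF of the lower tail. -/
lemma cdf_le_of_gt (hZ : Measurable Z)
    (hcdf : ∀ t : ℝ, P {ω | t < Z ω} = ENNReal.ofReal (1 - p0F g t)) (t : ℝ) :
    P {ω | Z ω ≤ t} = ENNReal.ofReal (p0F g t) := by
  have hc : {ω | Z ω ≤ t} = {ω | t < Z ω}ᶜ := by
    ext ω; simp [not_lt]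
  rw [hc, prob_compl_eq_one_sub (measurableSet_lt measurable_const hZ), hcdf]
  have hp0 : 0 ≤ p0F g t := p0_nonneg
  have hp1 : p0F g t ≤ 1 := p0_le_one
  rw [show (1:ENNReal) = ENNReal.ofReal 1 by simp, ← ENNReal.ofReal_sub _ (by linarith)]
  norm_num

lemma leftQuantile_of_cdfp0 (hg : MemG g) (hZ : Measurable Z)
    (hcdf : ∀ t : ℝ, P {ω | t < Z ω} = ENNReal.ofReal (1 - p0F g t))
    {p : ℝ} (hp : p ∈ Ioc (0:ℝ) 1) : leftQuantile P Z p = g p := by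
  have hgm := hg.1
  have hS : {x : ℝ | ENNReal.ofReal p ≤ P {ω | Z ω ≤ x}} = Ici (g p) := by
    ext x
    rw [mem_setOf_eq, cdf_le_of_gt hZ hcdf, ENNReal.ofReal_le_ofReal_iff p0_nonneg]
    constructor
    · intro h
      by_contra hc
      rw [mem_Ici, not_le] at *
      -- use left continuity at p
      have h1 : ∀ᶠ u in nhdsWithin p (Iio p), x < g u :=
        (hg.2.2 p hp).eventually (eventually_gt_nhds hc)
      have h2 : Ioo (p/2) p ∈ nhdsWithin p (Iio p) :=
        Ioo_mem_nhdsLT (by linarith [hp.1])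
      obtain ⟨u, hu1, hu2⟩ := (h1.and (eventually_of_mem h2 (fun u hu => hu))).exists
      have huI : u ∈ Icc (0:ℝ) 1 := ⟨by linarith [hp.1, hu2.1], le_trans hu2.2.le hp.2⟩
      have humem : u ∈ ({u : ℝ | u ∈ Icc (0:ℝ) 1 ∧ x < g u} ∪ {1}) := Or.inl ⟨huI, hu1⟩
      have := csInf_le p0_bddBelow humem
      have : p0F g x < p := lt_of_le_of_lt this hu2.2
      linarith
    · intro h
      rw [mem_Ici] at h
      refine le_csInf ⟨1, Or.inr rfl⟩ fun v hv => ?_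
      rcases hv with hv | hv
      · by_contra hc
        push_neg at hc
        have : g v ≤ g p := hgm hv.1 ⟨hp.1.le, hp.2⟩ hc.le
        linarith [hv.2]
      · rw [mem_singleton_iff] at hv; rw [hv]; exact hp.2
  rw [leftQuantile, hS, csInf_Ici]

lemma rightQuantile_of_cdfp0 (hg : MemG g) (hZ : Measurable Z)
    (hcdf : ∀ t : ℝ, P {ω | t < Z ω} = ENNReal.ofReal (1 - p0F g t)) :
    rightQuantile P Z 0 = g 0 := by
  have hgm := hg.1
  have hT : {x : ℝ | ENNReal.ofReal 0 < P {ω | Z ω ≤ x}} = {x : ℝ | 0 < p0F g x} := by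
    ext x
    rw [mem_setOf_eq, cdf_le_of_gt hZ hcdf, mem_setOf_eq]
    simp [ENNReal.ofReal_pos]
  rw [rightQuantile, hT]
  have hlb : ∀ x ∈ {x : ℝ | 0 < p0F g x}, g 0 ≤ x := by
    intro x hx
    by_contra hc
    push_neg at hc
    have h0 : (0:ℝ) ∈ ({u : ℝ | u ∈ Icc (0:ℝ) 1 ∧ x < g u} ∪ {1}) :=
      Or.inl ⟨⟨le_rfl, zero_le_one⟩, hc⟩
    have := csInf_le p0_bddBelow h0
    rw [mem_setOf_eq] at hx
    have := lt_of_lt_of_le hx this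
    linarith
  have hmem : ∀ ε : ℝ, 0 < ε → (g 0 + ε) ∈ {x : ℝ | 0 < p0F g x} := by
    intro ε hε
    rw [mem_setOf_eq]
    have h1 : ∀ᶠ u in nhdsWithin 0 (Ioi 0), g u < g 0 + ε :=
      (hg.2.1).eventually (eventually_lt_nhds (by linarith))
    obtain ⟨V, hV, hVsub⟩ := eventually_nhdsWithin_iff.mp h1 |>.exists_mem
    obtain ⟨δ, hδ0, hδsub⟩ := Metric.mem_nhds_iff.mp hV
    set δ' := min (δ/2) 1 with hδ'
    have hδ'0 : 0 < δ' := lt_min (by linarith) one_pos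
    refine lt_of_lt_of_le hδ'0 (le_csInf ⟨1, Or.inr rfl⟩ fun v hv => ?_)
    rcases hv with hv | hv
    · by_contra hcv
      push_neg at hcv
      have hv0 : 0 ≤ v := hv.1.1
      have hvpos : 0 < v := by
        rcases lt_or_eq_of_le hv0 with h | h
        · exact h
        · exfalso
          rw [← h] at hv
          linarith [hv.2]
      have hvball : v ∈ Metric.ball (0:ℝ) δ := by
        rw [Metric.mem_ball, Real.dist_eq, sub_zero, abs_of_nonneg hv0]
        have : δ' ≤ δ/2 := min_le_left _ _
        linarith
      have := hVsub v (hδsub hvball) hvpos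
      linarith [hv.2]
    · rw [mem_singleton_iff] at hv
      rw [hv]
      exact min_le_right _ _
  have hne : {x : ℝ | 0 < p0F g x}.Nonempty := ⟨g 0 + 1, hmem 1 one_pos⟩
  refine le_antisymm ?_ (le_csInf hne hlb)
  by_contra hcon
  push_neg at hcon
  set ε := (sInf {x : ℝ | 0 < p0F g x} - g 0) / 2 with hε
  have hε0 : 0 < ε := by rw [hε]; linarith
  have := csInf_le ⟨g 0, hlb⟩ (hmem ε hε0)
  rw [hε] at this
  linarith

/-- Comonotonicity of any component with `grFun g ∘ VFun`. -/
lemma comonotone_vfun (hgm : MonotoneOn g (Icc (0:ℝ) 1))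
    (hI : ∀ n, e n ∈ Icc (0:ℝ) 1)
    (hG : ∀ n, GoodEvt P X (e n) (fam n)) (i : Fin d) :
    ComonotonePair P (X i) (fun ω => grFun g (VFun e fam ω)) := by
  classical
  -- null sets from the tail property
  have htails := fun n => (hG n).2.2 i
  set N : ℕ → Set Ω := fun n => (htails n).choose with hN
  have hN0 : ∀ n, P (N n) = 0 := fun n => (htails n).choose_spec.1
  have hNt : ∀ n, ∀ ω ∈ fam n, ω ∉ N n → ∀ ω' ∈ (fam n)ᶜ, ω' ∉ N n →
      X i ω' ≤ X i ω := fun n => (htails n).choose_spec.2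
  set Ntot : Set Ω := ⋃ n, toMeasurable P (N n) with hNtot
  have hNtot0 : P Ntot = 0 :=
    measure_iUnion_null fun n => by rw [measure_toMeasurable]; exact hN0 n
  have hNtotm : MeasurableSet Ntot :=
    MeasurableSet.iUnion fun n => measurableSet_toMeasurable P (N n)
  have hgood : ∀ ω ∉ Ntot, ∀ ω' ∉ Ntot,
      0 ≤ (X i ω - X i ω') * (grFun g (VFun e fam ω) - grFun g (VFun e fam ω')) := by
    have key : ∀ ω ∉ Ntot, ∀ ω' ∉ Ntot,
        grFun g (VFun e fam ω') < grFun g (VFun e fam ω) → X i ω' ≤ X i ω := by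
      intro ω hω ω' hω' hlt
      have hVlt : VFun e fam ω' < VFun e fam ω := by
        by_contra hc
        push_neg at hc
        exact absurd (grFun_mono hgm hc) (not_le.mpr hlt)
      obtain ⟨n, hn1, hn2⟩ :=
        (vfun_lt_iff hI (vfun_nonneg hI ω') ω).mp hVlt
      have hω'n : ω' ∉ fam n := by
        intro hc
        exact absurd (vfun_ge_of_mem hI hc) (not_le.mpr hn2)
      have hωN : ω ∉ N n := fun hc => hω (mem_iUnion.mpr ⟨n, subset_toMeasurable P _ hc⟩)
      have hω'N : ω' ∉ N n := fun hc => hω' (mem_iUnion.mpr ⟨n, subset_toMeasurable P _ hc⟩)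
      exact hNt n ω hn1 hωN ω' hω'n hω'N
    intro ω hω ω' hω'
    rcases lt_trichotomy (grFun g (VFun e fam ω)) (grFun g (VFun e fam ω')) with h | h | h
    · have h1 : X i ω ≤ X i ω' := key ω' hω' ω hω h
      have := mul_nonneg (neg_nonneg.mpr (by linarith : X i ω - X i ω' ≤ 0))
        (neg_nonneg.mpr (by linarith : grFun g (VFun e fam ω) - grFun g (VFun e fam ω') ≤ 0))
      rwa [neg_mul_neg] at this
    · rw [h]; simp
    · have h1 : X i ω' ≤ X i ω := key ω hω ω' hω' h
      exact mul_nonneg (by linarith) (by linarith)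
  rw [ComonotonePair, MeasureTheory.ae_iff]
  refine measure_mono_null (fun w hw => ?_)
    (show (P.prod P) ((Ntot ×ˢ univ) ∪ (univ ×ˢ Ntot)) = 0 from ?_)
  · simp only [mem_setOf_eq] at hw
    by_contra hc
    rw [mem_union] at hc
    push_neg at hc
    have hw1 : w.1 ∉ Ntot := fun h => hc.1 (mem_prod.mpr ⟨h, mem_univ _⟩)
    have hw2 : w.2 ∉ Ntot := fun h => hc.2 (mem_prod.mpr ⟨mem_univ _, h⟩)
    exact hw (hgood w.1 hw1 w.2 hw2)
  · refine measure_union_null ?_ ?_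
    · rw [Measure.prod_prod, hNtot0, zero_mul]
    · rw [Measure.prod_prod, hNtot0, mul_zero]

end Bwd5
section Bwd6
variable {Ω : Type*} [MeasurableSpace Ω] {P : MeasureTheory.Measure Ω}
  [MeasureTheory.IsProbabilityMeasure P] {d : ℕ} {X : Fin d → Ω → ℝ} {g : ℝ → ℝ}

lemma psi_subset_Icc : PSI g ⊆ Icc (0:ℝ) 1 := by
  rintro p (⟨⟨h1, h2⟩, -⟩ | ⟨⟨h1, h2⟩, -⟩)
  · exact ⟨h1, h2.le⟩
  · exact ⟨h1.le, h2⟩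

lemma concentrated_to_gcomonotone (hP : Atomless P) (hg : MemG g)
    (hX : ∀ i, Measurable (X i)) (hK : KConcentrated P X (PSI g)) :
    GComonotone P g X := by
  classical
  obtain ⟨D, hDsub, hDc, hDdense⟩ :=
    (TopologicalSpace.IsSeparable.of_separableSpace (PSI g)).exists_countable_dense_subset
  set E := insert (0:ℝ) (insert (1:ℝ) D) with hE
  have hEc : E.Countable := (hDc.insert _).insert _
  have hEne : E.Nonempty := ⟨0, mem_insert _ _⟩
  obtain ⟨e, hte⟩ := hEc.exists_eq_range hEne
  have hmemE : ∀ n, e n ∈ E := by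
    intro n; rw [hte]; exact mem_range_self n
  have hI : ∀ n, e n ∈ Icc (0:ℝ) 1 := by
    intro n
    rcases hmemE n with h | h | h
    · rw [h]; exact ⟨le_rfl, zero_le_one⟩
    · rw [h]; exact ⟨zero_le_one, le_rfl⟩
    · exact psi_subset_Icc (hDsub h)
  have hRaw : ∀ n, ∃ A, GoodEvt P X (e n) A := by
    intro n
    rcases hmemE n with h | h | h
    · exact ⟨univ, by rw [h]; exact goodEvt_univ⟩
    · exact ⟨∅, by rw [h]; exact goodEvt_empty⟩
    · have hpsi : e n ∈ PSI g := hDsub h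
      rcases Nat.eq_zero_or_pos d with hd | hd
      · obtain ⟨B, -, hBm, hBP⟩ := hP univ MeasurableSet.univ
          (ENNReal.ofReal (1 - e n))
          (by rw [measure_univ]; exact ENNReal.ofReal_le_one.mpr (by linarith [(hI n).1]))
        refine ⟨B, hBm, hBP, fun i => ?_⟩
        exfalso
        rw [hd] at i
        exact i.elim0
      · obtain ⟨A, hA⟩ := hK (e n) hpsi
        have i0 : Fin d := ⟨0, hd⟩
        exact ⟨A, (hA i0).1.1, (hA i0).2, fun i => (hA i).1.2⟩
  set fam : ℕ → Set Ω := fun n => famAux P X e (n+1) n with hfam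
  have hG : ∀ n, GoodEvt P X (e n) (fam n) :=
    fun n => (famAux_inv hP hI hRaw (n+1)).1 n (lt_add_one n)
  have hN : ∀ m n, e m ≤ e n → fam n ⊆ fam m := by
    intro m n h
    have h1 := (famAux_inv hP hI hRaw (max m n + 1)).2 n (by omega) m (by omega) h
    rwa [famAux_stable (max m n + 1) (n+1) n (lt_add_one n) (by omega),
      famAux_stable (max m n + 1) (m+1) m (lt_add_one m) (by omega)] at h1
  have hdense : ∀ ψ ∈ PSI g, ∀ ε : ℝ, 0 < ε → ∃ n, |e n - ψ| < ε := by
    intro ψ hψ ε hε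
    obtain ⟨b, hbD, hbd⟩ := Metric.mem_closure_iff.mp (hDdense hψ) ε hε
    have : b ∈ range e := by rw [← hte]; exact mem_insert_of_mem _ (mem_insert_of_mem _ hbD)
    obtain ⟨n, hn⟩ := this
    refine ⟨n, ?_⟩
    rw [hn, abs_sub_comm, ← Real.dist_eq]
    exact hbd
  set Z : Ω → ℝ := fun ω => grFun g (VFun e fam ω) with hZdef
  have hZm : Measurable Z :=
    (grFun_mono hg.1).measurable.comp (vfun_measurable hI (fun n => (hG n).1))
  have hcdf : ∀ t : ℝ, P {ω | t < Z ω} = ENNReal.ofReal (1 - p0F g t) :=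
    cdf_grV hg.1 hI hG hN hdense
  refine ⟨Z, hZm, ?_, fun i => comonotone_vfun hg.1 hI hG i⟩
  intro p hp
  rw [Q]
  split_ifs with h
  · rw [h]
    exact rightQuantile_of_cdfp0 hg hZm hcdf
  · exact leftQuantile_of_cdfp0 hg hZm hcdf ⟨lt_of_le_of_ne hp.1 (Ne.symm h), hp.2⟩

end Bwd6
/-- For `g ∈ 𝒢`, a random vector is `g`-comonotonic iff it is
`PSI(g)`-concentrated. -/
theorem stmt_15 {Ω : Type*} [MeasurableSpace Ω] (P : MeasureTheory.Measure Ω)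
    [MeasureTheory.IsProbabilityMeasure P] (hP : Atomless P)
    (g : ℝ → ℝ) (hg : MemG g)
    {d : ℕ} (X : Fin d → Ω → ℝ) (hX : ∀ i, Measurable (X i)) :
    GComonotone P g X ↔ KConcentrated P X (PSI g) := by
  exact ⟨fun h => gcomonotone_to_concentrated hg hX h,
    fun h => concentrated_to_gcomonotone hP hg hX h⟩
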